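/- For C1 ≠ 0, the curves x(t) = (1/C1)(C3 - C2 sin(C1 t) - C3 cos(C1 t)), θ(t) = (1/C1)(C2 - C2 cos(C1 t) + C3 sin(C1 t)), together with y(t) = (1/(4C1²))(2C1(C2²+C3²)t - 4C2C3 cos(C1 t) + 2C2C3 cos(2C1 t) - 4C2² sin(C1 t) + (C2² - C3²) sin(2C1 t) + 2C2C3), satisfy ẋ = h2, ẏ = θ h2, θ̇ = h1 with h1 = C2 sin(C1 t) + C3 cos(C1 t), h2 = C3 sin(C1 t) - C2 cos(C1 t), and the initial condition x(0) = y(0) = θ(0) = 0. -/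

import Mathlib

open Real

/-- For `C1 ≠ 0`, the explicit curves `x(t), y(t), θ(t)` solve the horizontal system
`ẋ = h2`, `ẏ = θ h2`, `θ̇ = h1` with `h1 = C2 sin(C1 t) + C3 cos(C1 t)`,
`h2 = C3 sin(C1 t) - C2 cos(C1 t)`, and satisfy `x(0) = y(0) = θ(0) = 0`. -/
theorem horizontal_system_solution (C1 C2 C3 : ℝ) (hC1 : C1 ≠ 0) :
    let h1 : ℝ → ℝ := fun t => C2 * sin (C1 * t) + C3 * cos (C1 * t)
    let h2 : ℝ → ℝ := fun t => C3 * sin (C1 * t) - C2 * cos (C1 * t)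
    let x : ℝ → ℝ := fun t => (1 / C1) * (C3 - C2 * sin (C1 * t) - C3 * cos (C1 * t))
    let θ : ℝ → ℝ := fun t => (1 / C1) * (C2 - C2 * cos (C1 * t) + C3 * sin (C1 * t))
    let y : ℝ → ℝ := fun t => (1 / (4 * C1 ^ 2)) *
      (2 * C1 * (C2 ^ 2 + C3 ^ 2) * t - 4 * C2 * C3 * cos (C1 * t)
        + 2 * C2 * C3 * cos (2 * C1 * t) - 4 * C2 ^ 2 * sin (C1 * t)
        + (C2 ^ 2 - C3 ^ 2) * sin (2 * C1 * t) + 2 * C2 * C3)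
    (∀ t, HasDerivAt x (h2 t) t) ∧
    (∀ t, HasDerivAt y (θ t * h2 t) t) ∧
    (∀ t, HasDerivAt θ (h1 t) t) ∧
    x 0 = 0 ∧ y 0 = 0 ∧ θ 0 = 0 := by
  intro h1 h2 x θ y
  have hlin : ∀ (c : ℝ) (t : ℝ), HasDerivAt (fun s : ℝ => c * s) c t := by
    intro c t; simpa using (hasDerivAt_id t).const_mul c
  have hsin : ∀ (c : ℝ) (t : ℝ),
      HasDerivAt (fun s : ℝ => sin (c * s)) (cos (c * t) * c) t := by
    intro c t
    exact (Real.hasDerivAt_sin (c * t)).comp t (hlin c t)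
  have hcos : ∀ (c : ℝ) (t : ℝ),
      HasDerivAt (fun s : ℝ => cos (c * s)) (-sin (c * t) * c) t := by
    intro c t
    exact (Real.hasDerivAt_cos (c * t)).comp t (hlin c t)
  refine ⟨?_, ?_, ?_, ?_, ?_, ?_⟩
  · intro t
    have h : HasDerivAt x
        ((1 / C1) * (0 - C2 * (cos (C1 * t) * C1) - C3 * (-sin (C1 * t) * C1))) t := by
      exact (((hasDerivAt_const t C3).sub ((hsin C1 t).const_mul C2)).sub
        ((hcos C1 t).const_mul C3)).const_mul (1 / C1)
    convert h using 1
    field_simp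
    ring
  · intro t
    have h : HasDerivAt y
        ((1 / (4 * C1 ^ 2)) *
          (2 * C1 * (C2 ^ 2 + C3 ^ 2) - 4 * C2 * C3 * (-sin (C1 * t) * C1)
            + 2 * C2 * C3 * (-sin (2 * C1 * t) * (2 * C1))
            - 4 * C2 ^ 2 * (cos (C1 * t) * C1)
            + (C2 ^ 2 - C3 ^ 2) * (cos (2 * C1 * t) * (2 * C1)) + 0)) t := by
      exact (((((((hlin (2 * C1 * (C2 ^ 2 + C3 ^ 2)) t).sub
        ((hcos C1 t).const_mul (4 * C2 * C3))).add
        ((hcos (2 * C1) t).const_mul (2 * C2 * C3))).sub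
        ((hsin C1 t).const_mul (4 * C2 ^ 2))).add
        ((hsin (2 * C1) t).const_mul (C2 ^ 2 - C3 ^ 2))).add
        (hasDerivAt_const t (2 * C2 * C3))).const_mul (1 / (4 * C1 ^ 2)))
    convert h using 1
    have e1 : sin (2 * C1 * t) = 2 * sin (C1 * t) * cos (C1 * t) := by
      rw [show (2:ℝ) * C1 * t = 2 * (C1 * t) by ring, Real.sin_two_mul]
    have e2 : cos (2 * C1 * t) = 1 - 2 * sin (C1 * t) ^ 2 := by
      rw [show (2:ℝ) * C1 * t = 2 * (C1 * t) by ring, Real.cos_two_mul]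
      nlinarith [Real.sin_sq_add_cos_sq (C1 * t)]
    have h1sq : sin (C1 * t) ^ 2 = 1 - cos (C1 * t) ^ 2 := by
      nlinarith [Real.sin_sq_add_cos_sq (C1 * t)]
    simp only [h2, θ, e1, e2, h1sq]
    field_simp
    linear_combination (4 * C1 * C3 ^ 2) * Real.sin_sq_add_cos_sq (C1 * t)
  · intro t
    have h : HasDerivAt θ
        ((1 / C1) * (0 - C2 * (-sin (C1 * t) * C1) + C3 * (cos (C1 * t) * C1))) t := by
      exact (((hasDerivAt_const t C2).sub ((hcos C1 t).const_mul C2)).add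
        ((hsin C1 t).const_mul C3)).const_mul (1 / C1)
    convert h using 1
    field_simp
    ring
  · simp [x]
  · simp [y]; right; ring
  · simp [θ]
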